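/- With Pos defined over the M-type M S Q by the same inductive clauses (here at the root's P-positions, below following one step of the destructor), the extension Σ m : M S Q, (Pos m → X) carries a coalgebra structure 'out' for the functor Y ↦ Σ s : S, ((P s → X) × (Q s → Y)), and this coalgebra is terminal: for every coalgebra (Y, β) there is a unique map β̄ : Y → Σ m, (Pos m → X) commuting with the coalgebra structures. -/

import Mathlib

/-- Finite paths in an `M`-tree ending at a parameter position. -/
inductive MPos (S : Type) (P Q : S → Type) : PFunctor.M ⟨S, Q⟩ → Type
  | here : ∀ {m : PFunctor.M ⟨S, Q⟩}, P (PFunctor.M.dest m).1 → MPos S P Q m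
  | step : ∀ {m : PFunctor.M ⟨S, Q⟩} (q : Q (PFunctor.M.dest m).1),
      MPos S P Q ((PFunctor.M.dest m).2 q) → MPos S P Q m

/-- The canonical coalgebra structure on `Σ m : M S Q, (MPos m → X)` for the
functor `Y ↦ Σ s : S, ((P s → X) × (Q s → Y))`. -/
def out (S : Type) (P Q : S → Type) (X : Type)
    (a : Σ m : PFunctor.M ⟨S, Q⟩, MPos S P Q m → X) :
    Σ s : S, (P s → X) × (Q s → Σ m : PFunctor.M ⟨S, Q⟩, MPos S P Q m → X) :=
  ⟨(PFunctor.M.dest a.1).1, fun p => a.2 (.here p),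
    fun q => ⟨(PFunctor.M.dest a.1).2 q, fun t => a.2 (.step q t)⟩⟩

section Aux

variable {S : Type} {P Q : S → Type} {X Y : Type}

theorem funSigma_ext {α : Type} {B : α → Type} {C : Type u} {a b : α}
    (h : a = b) (f : B a → C) (k : B b → C)
    (hf : ∀ p, f p = k (cast (by rw [h]) p)) :
    (⟨a, f⟩ : Σ x, B x → C) = ⟨b, k⟩ := by
  subst h; exact congrArg (Sigma.mk a) (funext hf)

theorem funSigma_unpack {α : Type} {B : α → Type} {C : Type u} {a b : α}
    {f : B a → C} {k : B b → C}
    (h : (⟨a, f⟩ : Σ x, B x → C) = ⟨b, k⟩) (hs : a = b) :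
    ∀ p, f p = k (cast (by rw [hs]) p) := by
  subst hs
  have hk : f = k := by simpa using h
  intro p; rw [hk]; exact congrArg k (cast_eq _ p).symm

theorem Fmk_ext {A : Type} {a b : S} (h : a = b) (f1 : P a → X) (k1 : P b → X)
    (f2 : Q a → A) (k2 : Q b → A)
    (h1 : ∀ p, f1 p = k1 (cast (by rw [h]) p))
    (h2 : ∀ q, f2 q = k2 (cast (by rw [h]) q)) :
    (⟨a, f1, f2⟩ : Σ s, (P s → X) × (Q s → A)) = ⟨b, k1, k2⟩ := by
  subst h
  exact congrArg (fun z => Sigma.mk a z) (congrArg₂ Prod.mk (funext h1) (funext h2))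

theorem Fmk_unpack {A : Type} {a b : S} {f1 : P a → X} {k1 : P b → X}
    {f2 : Q a → A} {k2 : Q b → A}
    (h : (⟨a, f1, f2⟩ : Σ s, (P s → X) × (Q s → A)) = ⟨b, k1, k2⟩) :
    ∃ hs : a = b, (∀ p, f1 p = k1 (cast (by rw [hs]) p)) ∧
      (∀ q, f2 q = k2 (cast (by rw [hs]) q)) := by
  have hs : a = b := congrArg Sigma.fst h
  subst hs
  have h' : f1 = k1 ∧ f2 = k2 := by simpa using h
  exact ⟨rfl, fun p => by rw [h'.1]; exact congrArg k1 (cast_eq _ p).symm,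
    fun q => by rw [h'.2]; exact congrArg k2 (cast_eq _ q).symm⟩

variable (β : Y → Σ s : S, (P s → X) × (Q s → Y))

/-- The underlying `M`-tree of the corecursively-defined map. -/
def gfun : Y → PFunctor.M ⟨S, Q⟩ :=
  PFunctor.M.corec fun y => ⟨(β y).1, (β y).2.2⟩

theorem gfun_dest (y : Y) :
    PFunctor.M.dest (gfun β y) = ⟨(β y).1, fun q => gfun β ((β y).2.2 q)⟩ := by
  exact PFunctor.M.dest_corec _ y

theorem gfun_dest_snd (y : Y) (q : Q (PFunctor.M.dest (gfun β y)).1) :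
    (PFunctor.M.dest (gfun β y)).2 q =
      gfun β ((β y).2.2 (cast (by rw [gfun_dest]) q)) :=
  funSigma_unpack (gfun_dest β y) (congrArg Sigma.fst (gfun_dest β y)) q

/-- Labels along a path, by recursion on the path. -/
def lab : ∀ {m : PFunctor.M ⟨S, Q⟩}, MPos S P Q m → ∀ y : Y, gfun β y = m → X
  | _, .here p, y, h => (β y).2.1 (cast (by rw [← h, gfun_dest]) p)
  | _, .step q t, y, h =>
      lab t ((β y).2.2 (cast (by rw [← h, gfun_dest]) q))
        (by subst h; exact (gfun_dest_snd β y q).symm)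

theorem lab_cast {m₁ m₂ : PFunctor.M ⟨S, Q⟩} (h : m₁ = m₂) (t : MPos S P Q m₁)
    (y : Y) (p₁ : gfun β y = m₁) (p₂ : gfun β y = m₂) :
    lab β t y p₁ = lab β (cast (by rw [h]) t) y p₂ := by
  subst h; rfl

/-- The candidate unique coalgebra morphism. -/
def bigF : Y → Σ m, MPos S P Q m → X :=
  fun y => ⟨gfun β y, fun t => lab β t y rfl⟩

theorem bigF_hom :
    out S P Q X ∘ bigF β =
      (fun a : Σ s : S, (P s → X) × (Q s → Y) =>
        (⟨a.1, a.2.1, bigF β ∘ a.2.2⟩ : Σ s : S, (P s → X) × (Q s → Σ m, MPos S P Q m → X))) ∘ β := by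
  funext y
  show (⟨(PFunctor.M.dest (gfun β y)).1,
      fun p => lab β (.here p) y rfl,
      fun q => ⟨(PFunctor.M.dest (gfun β y)).2 q, fun t => lab β (.step q t) y rfl⟩⟩ :
      Σ s : S, (P s → X) × (Q s → Σ m, MPos S P Q m → X)) =
    ⟨(β y).1, (β y).2.1, fun q => bigF β ((β y).2.2 q)⟩
  refine Fmk_ext (congrArg Sigma.fst (gfun_dest β y)) _ _ _ _ ?_ ?_
  · intro p; simp only [lab]
  · intro q
    refine funSigma_ext (B := MPos S P Q) (gfun_dest_snd β y q) _ _ fun t => ?_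
    simp only [lab]
    exact lab_cast β (gfun_dest_snd β y q) t _ _ _

end Aux

section Uniq

variable {S : Type} {P Q : S → Type} {X Y : Type}
variable (β : Y → Σ s : S, (P s → X) × (Q s → Y))

theorem hom_fst (f : Y → Σ m, MPos S P Q m → X)
    (hf : out S P Q X ∘ f =
      (fun a : Σ s : S, (P s → X) × (Q s → Y) =>
        (⟨a.1, a.2.1, f ∘ a.2.2⟩ : Σ s : S, (P s → X) × (Q s → Σ m, MPos S P Q m → X))) ∘ β)
    (y : Y) : (f y).1 = gfun β y := by
  apply PFunctor.M.bisim (fun m₁ m₂ => ∃ y, m₁ = (f y).1 ∧ m₂ = gfun β y) ?_ _ _ ⟨y, rfl, rfl⟩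
  rintro _ _ ⟨y, rfl, rfl⟩
  obtain ⟨hs, hp, hq⟩ := Fmk_unpack (congrFun hf y)
  refine ⟨(β y).1, fun q => (f ((β y).2.2 q)).1, fun q => gfun β ((β y).2.2 q), ?_, gfun_dest β y, ?_⟩
  · exact funSigma_ext hs _ _ fun q => congrArg Sigma.fst (hq q)
  · intro q; exact ⟨(β y).2.2 q, rfl, rfl⟩

theorem lab_unique (f : Y → Σ m, MPos S P Q m → X)
    (hf : out S P Q X ∘ f =
      (fun a : Σ s : S, (P s → X) × (Q s → Y) =>
        (⟨a.1, a.2.1, f ∘ a.2.2⟩ : Σ s : S, (P s → X) × (Q s → Σ m, MPos S P Q m → X))) ∘ β) :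
    ∀ {m} (t : MPos S P Q m) (y : Y) (h1 : m = (f y).1) (h2 : gfun β y = m),
      (f y).2 (cast (by rw [h1]) t) = lab β t y h2 := by
  intro m t
  induction t with
  | @here m p =>
    intro y h1 h2
    obtain ⟨hs, hp, hq⟩ := Fmk_unpack (congrFun hf y)
    subst h1
    exact hp p
  | @step m q t IH =>
    intro y h1 h2
    obtain ⟨hs, hp, hq⟩ := Fmk_unpack (congrFun hf y)
    subst h1
    have hdest : PFunctor.M.dest (f y).1 = ⟨(β y).1, fun q => gfun β ((β y).2.2 q)⟩ := by
      rw [← h2]; exact gfun_dest β y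
    have pf' : gfun β ((β y).2.2 (cast (by rw [hdest]) q)) = (PFunctor.M.dest (f y).1).2 q :=
      (funSigma_unpack hdest (congrArg Sigma.fst hdest) q).symm
    have h5 := funSigma_unpack (hq q) (congrArg Sigma.fst (hq q)) t
    have h6 := IH ((β y).2.2 (cast (by rw [hdest]) q)) (congrArg Sigma.fst (hq q)) pf'
    simp only [lab]
    exact (h5.trans h6)

end Uniq

theorem container_preserves_terminal_coalgebra (S : Type) (P Q : S → Type) (X : Type)
    (Y : Type) (β : Y → Σ s : S, (P s → X) × (Q s → Y)) :
    ∃! f : Y → Σ m : PFunctor.M ⟨S, Q⟩, MPos S P Q m → X,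
      out S P Q X ∘ f =
        (fun a : Σ s : S, (P s → X) × (Q s → Y) => ⟨a.1, a.2.1, f ∘ a.2.2⟩) ∘ β := by
  refine ⟨bigF β, bigF_hom β, ?_⟩
  intro f hf
  funext y
  refine funSigma_ext (B := MPos S P Q) (hom_fst β f hf y) _ _ fun t => ?_
  have h := lab_unique β f hf (cast (by rw [hom_fst β f hf y]) t) y ((hom_fst β f hf y)).symm rfl
  rw [cast_cast] at h
  exact h
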